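/- Let A be a symmetric positive semidefinite matrix and A_k its best rank-k approximation in Frobenius norm (obtained by truncating the eigendecomposition to the k largest eigenvalues). Then ‖A − A_k‖_F ≤ tr(A)/√k. -/
import Mathlib

open Matrix

/-- For a symmetric PSD matrix `A = U Λ Uᵀ` with eigenvalues
`λ₁ ≥ … ≥ λₙ ≥ 0`, and `A_k` the best rank-`k` approximation obtained by keeping the top `k`
eigenvalues, one has `‖A − A_k‖_F ≤ tr(A) / √k`. -/
theorem frobenius_norm_sub_rank_k_approx_le_trace_div_sqrt
    (n k : ℕ) (hk : 1 ≤ k)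
    (U : Matrix (Fin n) (Fin n) ℝ) (hU : Uᵀ * U = 1)
    (lam : Fin n → ℝ) (hnonneg : ∀ i, 0 ≤ lam i)
    (hmono : ∀ i j : Fin n, i ≤ j → lam j ≤ lam i)
    (A Ak : Matrix (Fin n) (Fin n) ℝ)
    (hA : A = U * Matrix.diagonal lam * Uᵀ)
    (hAk : Ak = U * Matrix.diagonal (fun i : Fin n => if (i : ℕ) < k then lam i else 0) * Uᵀ) :
    Real.sqrt (∑ i, ∑ j, ((A - Ak) i j) ^ 2) ≤ A.trace / Real.sqrt k := by
  set μ : Fin n → ℝ := fun i => if (i : ℕ) < k then 0 else lam i with hμ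
  have hμnn : ∀ i, 0 ≤ μ i := by
    intro i; simp only [hμ]; split
    · exact le_rfl
    · exact hnonneg i
  set M : Matrix (Fin n) (Fin n) ℝ := U * Matrix.diagonal μ * Uᵀ with hM
  have hdiff : A - Ak = M := by
    rw [hA, hAk, hM, ← sub_mul, ← Matrix.mul_sub, Matrix.diagonal_sub]
    have hfun : (fun i => lam i - if (i : ℕ) < k then lam i else 0) = μ := by
      funext i; simp only [hμ]; split <;> simp
    rw [hfun]
  have htrA : A.trace = ∑ i, lam i := by
    rw [hA, Matrix.mul_assoc, Matrix.trace_mul_comm, Matrix.mul_assoc, hU, Matrix.mul_one,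
      Matrix.trace_diagonal]
  have hfrob : (∑ i, ∑ j, (M i j) ^ 2) = ∑ i, μ i ^ 2 := by
    have h1 : (∑ i, ∑ j, (M i j) ^ 2) = (Mᵀ * M).trace := by
      simp [Matrix.trace, Matrix.mul_apply, Matrix.diag, sq]
      rw [Finset.sum_comm]
    have hMT : Mᵀ = M := by
      rw [hM]; simp [Matrix.transpose_mul, Matrix.mul_assoc]
    have h2 : Mᵀ * M = U * Matrix.diagonal (fun i => μ i ^ 2) * Uᵀ := by
      rw [hMT, hM]
      simp only [Matrix.mul_assoc]
      rw [← Matrix.mul_assoc Uᵀ U, hU, Matrix.one_mul,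
        ← Matrix.mul_assoc (Matrix.diagonal μ) (Matrix.diagonal μ), Matrix.diagonal_mul_diagonal]
      congr 2
      funext i; ring
    rw [h1, h2, Matrix.mul_assoc, Matrix.trace_mul_comm, Matrix.mul_assoc, hU, Matrix.mul_one,
      Matrix.trace_diagonal]
  rw [hdiff, hfrob, htrA]
  set t : ℝ := ∑ i, lam i with ht
  have htnn : 0 ≤ t := Finset.sum_nonneg fun i _ => hnonneg i
  have hkpos : (0 : ℝ) < k := by positivity
  have hbound : ∀ i, μ i ≤ t / k := by
    intro i
    simp only [hμ]
    split
    · positivity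
    · rename_i hik
      push_neg at hik
      have hkn : k ≤ n := le_trans hik (Nat.le_of_lt i.isLt)
      rw [le_div_iff₀ hkpos]
      have h1 : (k : ℝ) * lam i ≤ ∑ j : Fin k, lam (Fin.castLEEmb hkn j) := by
        have := Finset.sum_le_sum (s := (Finset.univ : Finset (Fin k)))
          (f := fun _ => lam i) (g := fun j => lam (Fin.castLEEmb hkn j))
          (fun j _ => hmono _ _ (by simp [Fin.le_def]; omega))
        simpa [Finset.sum_const, mul_comm] using this
      have h2 : ∑ j : Fin k, lam (Fin.castLEEmb hkn j) ≤ t := by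
        rw [ht, ← Finset.sum_map Finset.univ (Fin.castLEEmb hkn) lam]
        exact Finset.sum_le_sum_of_subset_of_nonneg (Finset.subset_univ _)
          (fun j _ _ => hnonneg j)
      linarith
  have hμle : ∀ i, μ i ≤ lam i := by
    intro i; simp only [hμ]; split
    · exact hnonneg i
    · exact le_rfl
  have hsum : (∑ i, μ i ^ 2) ≤ t ^ 2 / k := by
    calc (∑ i, μ i ^ 2) ≤ ∑ i, (t / k) * μ i := by
          refine Finset.sum_le_sum fun i _ => ?_
          have h1 := hbound i
          have h2 := hμnn i
          nlinarith
      _ = (t / k) * ∑ i, μ i := by rw [Finset.mul_sum]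
      _ ≤ (t / k) * t := by
          have : (∑ i, μ i) ≤ t := by
            rw [ht]; exact Finset.sum_le_sum fun i _ => hμle i
          exact mul_le_mul_of_nonneg_left this (by positivity)
      _ = t ^ 2 / k := by ring
  calc Real.sqrt (∑ i, μ i ^ 2) ≤ Real.sqrt (t ^ 2 / k) := Real.sqrt_le_sqrt hsum
    _ = t / Real.sqrt k := by
        rw [Real.sqrt_div (sq_nonneg t), Real.sqrt_sq htnn]
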